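/- There is a bijection φ from the set TrSSYT(g,r) of transposed SSYT of content (r^g) and height ≤ r+1 to the set of 180°-rotated standard Young tableaux of size g and height ≤ r+1; moreover, for every R in TrSSYT(g,r), the shapes of R and φ(R) are complementary in an (r+1)×g rectangle. -/

import Mathlib

/-- A transposed semistandard Young tableau with at most r+1 rows and content (i^g):
rows strictly increase left to right, columns weakly increase bottom to top,
each of 1,…,g appears exactly i times. Cells are `some v` (filled) or `none`. -/
structure TrSSYT (g r i : ℕ) where
  entry : Fin (r+1) → ℕ → Option ℕ
  left : ∀ (row : Fin (r+1)) (j j' : ℕ), (entry row j).isSome → j' ≤ j → (entry row j').isSome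
  down : ∀ (row row' : Fin (r+1)) (j : ℕ), (entry row j).isSome → row' ≤ row → (entry row' j).isSome
  vals : ∀ (row : Fin (r+1)) (j : ℕ) (v : ℕ), entry row j = some v → 1 ≤ v ∧ v ≤ g
  content : ∀ v : ℕ, 1 ≤ v → v ≤ g →
    {p : Fin (r+1) × ℕ | entry p.1 p.2 = some v}.ncard = i
  row_strict : ∀ (row : Fin (r+1)) (j j' : ℕ) (a b : ℕ),
    entry row j = some a → entry row j' = some b → j < j' → a < b
  col_weak : ∀ (row row' : Fin (r+1)) (j : ℕ) (a b : ℕ),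
    entry row j = some a → entry row' j = some b → row < row' → a ≤ b

/-- A 180°-rotated standard Young tableau of size g, placed right-and-top justified
in an (r+1)×g rectangle: each of 1,…,g appears exactly once, and both rows
(left to right) and columns (bottom to top) are strictly decreasing. -/
structure RotSYT (g r : ℕ) where
  entry : Fin (r+1) → Fin g → Option ℕ
  right : ∀ (i : Fin (r+1)) (j j' : Fin g), (entry i j).isSome → j ≤ j' → (entry i j').isSome
  up : ∀ (i i' : Fin (r+1)) (j : Fin g), (entry i j).isSome → i ≤ i' → (entry i' j).isSome
  vals : ∀ (i : Fin (r+1)) (j : Fin g) (v : ℕ), entry i j = some v → 1 ≤ v ∧ v ≤ g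
  content : ∀ v : ℕ, 1 ≤ v → v ≤ g → ∃! p : Fin (r+1) × Fin g, entry p.1 p.2 = some v
  row_dec : ∀ (i : Fin (r+1)) (j j' : Fin g) (a b : ℕ),
    entry i j = some a → entry i j' = some b → j < j' → b < a
  col_dec : ∀ (i i' : Fin (r+1)) (j : Fin g) (a b : ℕ),
    entry i j = some a → entry i' j = some b → i < i' → b < a


namespace Stmt3Aux

/-! ### Generic lemmas about `Option`-valued enumerations and sorted lists -/

lemma isSome_getElem?_iff {l : List ℕ} {i : ℕ} : l[i]?.isSome ↔ i < l.length := by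
  rw [Option.isSome_iff_ne_none]
  simp only [ne_eq, List.getElem?_eq_none_iff]
  omega

lemma sort_strict {A : Finset ℕ} {j j' a b : ℕ}
    (h1 : (A.sort (· ≤ ·))[j]? = some a) (h2 : (A.sort (· ≤ ·))[j']? = some b)
    (hjj : j < j') : a < b := by
  rw [List.getElem?_eq_some_iff] at h1 h2
  obtain ⟨hj, rfl⟩ := h1
  obtain ⟨hj', rfl⟩ := h2
  have := (Finset.sortedLT_sort A).getElem_lt_getElem_of_lt
    (hi := hj) (hj := hj') (by exact hjj)
  simpa [List.get_eq_getElem] using this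

/-- `e` is the (strictly increasing, left-justified) enumeration of `A`. -/
def Good (A : Finset ℕ) (e : ℕ → Option ℕ) : Prop :=
  (∀ j j', (e j).isSome → j' ≤ j → (e j').isSome) ∧
  (∀ j j' a b, e j = some a → e j' = some b → j < j' → a < b) ∧
  (∀ j a, e j = some a → a ∈ A) ∧
  (∀ a ∈ A, ∃ j, e j = some a)

lemma Good.sort (A : Finset ℕ) : Good A (fun j => (A.sort (· ≤ ·))[j]?) := by
  refine ⟨?_, ?_, ?_, ?_⟩
  · intro j j' hj hj'
    rw [isSome_getElem?_iff] at hj ⊢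
    omega
  · intro j j' a b h1 h2 hlt
    exact sort_strict h1 h2 hlt
  · intro j a h
    exact (Finset.mem_sort _).mp (List.mem_of_getElem? h)
  · intro a ha
    have : a ∈ A.sort (· ≤ ·) := (Finset.mem_sort _).mpr ha
    obtain ⟨n, hn, hna⟩ := List.mem_iff_getElem.mp this
    exact ⟨n, by simp only [List.getElem?_eq_getElem hn, hna]⟩

lemma Good.cnt {A : Finset ℕ} {e : ℕ → Option ℕ} (hg : Good A e) {j v : ℕ}
    (h : e j = some v) [DecidablePred (· < v)] :
    (A.filter (· < v)).card = j := by
  classical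
  obtain ⟨h1, h2, h3, h4⟩ := hg
  have hle : j ≤ (A.filter (· < v)).card := by
    have := Finset.card_le_card_of_injOn (f := fun k => (e k).getD 0)
      (s := Finset.range j) (t := A.filter (· < v)) ?_ ?_
    · simpa using this
    · intro k hk
      simp only [Finset.coe_range, Set.mem_Iio] at hk
      have hk' : (e k).isSome := h1 j k (by rw [h]; rfl) hk.le
      obtain ⟨a, ha⟩ := Option.isSome_iff_exists.mp hk'
      simp only [ha, Option.getD_some, Finset.mem_coe, Finset.mem_filter]
      exact ⟨h3 k a ha, h2 k j a v ha h hk⟩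
    · intro k hk k' hk' heq
      simp only [Finset.coe_range, Set.mem_Iio] at hk hk'
      by_contra hne
      rcases Nat.lt_or_ge k k' with hlt | hge
      · obtain ⟨a, ha⟩ := Option.isSome_iff_exists.mp (h1 j k (by rw [h]; rfl) hk.le)
        obtain ⟨b, hb⟩ := Option.isSome_iff_exists.mp (h1 j k' (by rw [h]; rfl) hk'.le)
        have := h2 k k' a b ha hb hlt
        simp only [ha, hb, Option.getD_some] at heq
        omega
      · have hlt : k' < k := by omega
        obtain ⟨a, ha⟩ := Option.isSome_iff_exists.mp (h1 j k (by rw [h]; rfl) hk.le)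
        obtain ⟨b, hb⟩ := Option.isSome_iff_exists.mp (h1 j k' (by rw [h]; rfl) hk'.le)
        have := h2 k' k b a hb ha hlt
        simp only [ha, hb, Option.getD_some] at heq
        omega
  have hge : (A.filter (· < v)).card ≤ j := by
    have hsub : A.filter (· < v) ⊆ (Finset.range j).image (fun k => (e k).getD 0) := by
      intro u hu
      rw [Finset.mem_filter] at hu
      obtain ⟨k, hk⟩ := h4 u hu.1
      have hkj : k < j := by
        rcases Nat.lt_trichotomy k j with h' | h' | h'
        · exact h'
        · subst h'; rw [h] at hk; simp at hk; omega
        · have := h2 j k v u h hk h'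
          omega
      exact Finset.mem_image.mpr ⟨k, Finset.mem_range.mpr hkj, by rw [hk]; rfl⟩
    calc (A.filter (· < v)).card ≤ _ := Finset.card_le_card hsub
      _ ≤ (Finset.range j).card := Finset.card_image_le
      _ = j := Finset.card_range j
  omega

lemma Good.lt_card {A : Finset ℕ} {e : ℕ → Option ℕ} (hg : Good A e) {j v : ℕ}
    (h : e j = some v) : j < A.card := by
  classical
  have hcnt := hg.cnt h
  have hv : v ∈ A := hg.2.2.1 j v h
  have : (insert v (A.filter (· < v))).card ≤ A.card := by
    apply Finset.card_le_card
    intro u hu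
    rcases Finset.mem_insert.mp hu with rfl | hu
    · exact hv
    · exact (Finset.mem_filter.mp hu).1
  rw [Finset.card_insert_of_notMem (by simp)] at this
  omega

lemma Good.card_le {A : Finset ℕ} {e : ℕ → Option ℕ} (hg : Good A e) {j : ℕ}
    (h : e j = none) : A.card ≤ j := by
  classical
  obtain ⟨h1, h2, h3, h4⟩ := hg
  have hsub : A ⊆ (Finset.range j).image (fun k => (e k).getD 0) := by
    intro u hu
    obtain ⟨k, hk⟩ := h4 u hu
    have hkj : k < j := by
      by_contra hge
      have : (e j).isSome := h1 k j (by rw [hk]; rfl) (by omega)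
      rw [h] at this; simp at this
    exact Finset.mem_image.mpr ⟨k, Finset.mem_range.mpr hkj, by rw [hk]; rfl⟩
  calc A.card ≤ _ := Finset.card_le_card hsub
    _ ≤ (Finset.range j).card := Finset.card_image_le
    _ = j := Finset.card_range j

lemma cnt_inj {A : Finset ℕ} {v w : ℕ} (hv : v ∈ A) (hw : w ∈ A)
    [DecidablePred (· < v)] [DecidablePred (· < w)]
    (h : (A.filter (· < v)).card = (A.filter (· < w)).card) : v = w := by
  classical
  rcases Nat.lt_trichotomy v w with hlt | heq | hlt
  · exfalso
    have : insert v (A.filter (· < v)) ⊆ A.filter (· < w) := by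
      intro u hu
      rcases Finset.mem_insert.mp hu with rfl | hu
      · exact Finset.mem_filter.mpr ⟨hv, hlt⟩
      · rw [Finset.mem_filter] at hu ⊢
        exact ⟨hu.1, by have := hu.2; omega⟩
    have hc := Finset.card_le_card this
    rw [Finset.card_insert_of_notMem (by simp)] at hc
    omega
  · exact heq
  · exfalso
    have : insert w (A.filter (· < w)) ⊆ A.filter (· < v) := by
      intro u hu
      rcases Finset.mem_insert.mp hu with rfl | hu
      · exact Finset.mem_filter.mpr ⟨hw, hlt⟩
      · rw [Finset.mem_filter] at hu ⊢
        exact ⟨hu.1, by have := hu.2; omega⟩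
    have hc := Finset.card_le_card this
    rw [Finset.card_insert_of_notMem (by simp)] at hc
    omega

/-- Any good enumeration agrees with the sorted enumeration. -/
lemma Good.eq_sort {A : Finset ℕ} {e : ℕ → Option ℕ} (hg : Good A e) (j : ℕ) :
    e j = (A.sort (· ≤ ·))[j]? := by
  classical
  rcases h : e j with _ | v
  · have := hg.card_le h
    symm
    rw [List.getElem?_eq_none_iff, Finset.length_sort]
    exact this
  · have hj : j < A.card := hg.lt_card h
    have hsome : ((A.sort (· ≤ ·))[j]?).isSome := by
      rw [isSome_getElem?_iff, Finset.length_sort]; exact hj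
    obtain ⟨w, hw⟩ := Option.isSome_iff_exists.mp hsome
    rw [hw]
    have hcv := hg.cnt h
    have hcw := (Good.sort A).cnt hw
    have hv : v ∈ A := hg.2.2.1 j v h
    have hwA : w ∈ A := (Good.sort A).2.2.1 j w hw
    rw [cnt_inj hv hwA (by omega)]

end Stmt3Aux
namespace Stmt3Aux

/-! ### The parametrizing data: a row-assignment function and the ballot condition -/

variable {g r : ℕ}

def Sset (g : ℕ) (f : ℕ → Fin (r+1)) (ρ : Fin (r+1)) : Finset ℕ :=
  (Finset.Icc 1 g).filter (fun u => f u = ρ)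

def Cset (g : ℕ) (f : ℕ → Fin (r+1)) (ρ : Fin (r+1)) : Finset ℕ :=
  (Finset.Icc 1 g).filter (fun u => f u ≠ ρ)

lemma mem_Sset {f : ℕ → Fin (r+1)} {ρ : Fin (r+1)} {v : ℕ} :
    v ∈ Sset g f ρ ↔ (1 ≤ v ∧ v ≤ g) ∧ f v = ρ := by
  simp [Sset, Finset.mem_filter, Finset.mem_Icc, and_assoc]

lemma mem_Cset {f : ℕ → Fin (r+1)} {ρ : Fin (r+1)} {v : ℕ} :
    v ∈ Cset g f ρ ↔ (1 ≤ v ∧ v ≤ g) ∧ f v ≠ ρ := by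
  simp [Cset, Finset.mem_filter, Finset.mem_Icc, and_assoc]

def Ballot (g : ℕ) (f : ℕ → Fin (r+1)) : Prop :=
  ∀ ρ ρ' : Fin (r+1), ρ ≤ ρ' → ∀ v : ℕ,
    ((Sset g f ρ).filter (· ≤ v)).card ≤ ((Sset g f ρ').filter (· ≤ v)).card

lemma filter_S_add_filter_C (f : ℕ → Fin (r+1)) (ρ : Fin (r+1)) (v : ℕ) :
    ((Sset g f ρ).filter (· ≤ v)).card + ((Cset g f ρ).filter (· ≤ v)).card
      = (((Finset.Icc 1 g)).filter (· ≤ v)).card := by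
  classical
  rw [Sset, Cset, Finset.filter_comm, Finset.filter_comm (fun u => f u ≠ ρ)]
  exact Finset.card_filter_add_card_filter_not (fun u => f u = ρ)

lemma S_card_add_C_card (f : ℕ → Fin (r+1)) (ρ : Fin (r+1)) :
    (Sset g f ρ).card + (Cset g f ρ).card = g := by
  classical
  have := Finset.card_filter_add_card_filter_not (s := Finset.Icc 1 g)
    (fun u => f u = ρ)
  rw [Sset, Cset]
  simpa [Nat.card_Icc] using this

lemma ballot_C {f : ℕ → Fin (r+1)} (hb : Ballot g f) {ρ ρ' : Fin (r+1)}
    (h : ρ ≤ ρ') (v : ℕ) :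
    ((Cset g f ρ').filter (· ≤ v)).card ≤ ((Cset g f ρ).filter (· ≤ v)).card := by
  have h1 := filter_S_add_filter_C (g := g) f ρ v
  have h2 := filter_S_add_filter_C (g := g) f ρ' v
  have h3 := hb ρ ρ' h v
  omega

lemma filter_le_self_of_all {A : Finset ℕ} {v : ℕ} (h : ∀ u ∈ A, u ≤ v) :
    A.filter (· ≤ v) = A := Finset.filter_true_of_mem h

lemma Sset_filter_g {f : ℕ → Fin (r+1)} (ρ : Fin (r+1)) :
    (Sset g f ρ).filter (· ≤ g) = Sset g f ρ :=
  filter_le_self_of_all (fun u hu => (mem_Sset.mp hu).1.2)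

lemma Cset_filter_g {f : ℕ → Fin (r+1)} (ρ : Fin (r+1)) :
    (Cset g f ρ).filter (· ≤ g) = Cset g f ρ :=
  filter_le_self_of_all (fun u hu => (mem_Cset.mp hu).1.2)

lemma Sset_card_le {f : ℕ → Fin (r+1)} {ρ : Fin (r+1)} : (Sset g f ρ).card ≤ g := by
  have := S_card_add_C_card (g := g) f ρ; omega

lemma Cset_card_le {f : ℕ → Fin (r+1)} {ρ : Fin (r+1)} : (Cset g f ρ).card ≤ g := by
  have := S_card_add_C_card (g := g) f ρ; omega

/-- key comparison: dominated prefix-counts give pointwise comparison of sorted lists. -/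
lemma sort_le_sort {A B : Finset ℕ}
    (h : ∀ v : ℕ, (B.filter (· ≤ v)).card ≤ (A.filter (· ≤ v)).card)
    {j a b : ℕ} (ha : (A.sort (· ≤ ·))[j]? = some a)
    (hb : (B.sort (· ≤ ·))[j]? = some b) : a ≤ b := by
  classical
  have hca := (Good.sort A).cnt ha
  have hcb := (Good.sort B).cnt hb
  have hbB : b ∈ B := (Good.sort B).2.2.1 j b hb
  by_contra hab
  push_neg at hab  -- b < a
  have h1 : (B.filter (· ≤ b)).card = j + 1 := by
    have : B.filter (· ≤ b) = insert b (B.filter (· < b)) := by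
      ext u
      simp only [Finset.mem_filter, Finset.mem_insert]
      constructor
      · rintro ⟨hu, hub⟩
        rcases eq_or_lt_of_le hub with rfl | h'
        · exact Or.inl rfl
        · exact Or.inr ⟨hu, h'⟩
      · rintro (rfl | ⟨hu, h'⟩)
        · exact ⟨hbB, le_refl _⟩
        · exact ⟨hu, le_of_lt h'⟩
    rw [this, Finset.card_insert_of_notMem (by simp), hcb]
  have h2 : (A.filter (· ≤ b)).card ≤ j := by
    calc (A.filter (· ≤ b)).card ≤ (A.filter (· < a)).card := by
          apply Finset.card_le_card
          intro u hu
          rw [Finset.mem_filter] at hu ⊢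
          exact ⟨hu.1, lt_of_le_of_lt hu.2 hab⟩
      _ = j := hca
  have := h b
  omega

end Stmt3Aux
namespace Stmt3Aux

variable {g r : ℕ}

/-! ### Construction of the two tableaux from a ballot function -/

def RmkE (g : ℕ) (f : ℕ → Fin (r+1)) (ρ : Fin (r+1)) (j : ℕ) : Option ℕ :=
  ((Cset g f ρ).sort (· ≤ ·))[j]?

def QmkE (g : ℕ) (f : ℕ → Fin (r+1)) (ρ : Fin (r+1)) (j : Fin g) : Option ℕ :=
  ((Sset g f ρ).sort (· ≤ ·))[g - 1 - (j : ℕ)]?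

lemma RmkE_isSome {f : ℕ → Fin (r+1)} {ρ : Fin (r+1)} {j : ℕ} :
    (RmkE g f ρ j).isSome ↔ j < (Cset g f ρ).card := by
  rw [RmkE, isSome_getElem?_iff, Finset.length_sort]

lemma QmkE_isSome {f : ℕ → Fin (r+1)} {ρ : Fin (r+1)} {j : Fin g} :
    (QmkE g f ρ j).isSome ↔ g - 1 - (j : ℕ) < (Sset g f ρ).card := by
  rw [QmkE, isSome_getElem?_iff, Finset.length_sort]

lemma C_card_mono {f : ℕ → Fin (r+1)} (hb : Ballot g f) {ρ ρ' : Fin (r+1)}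
    (h : ρ' ≤ ρ) : (Cset g f ρ).card ≤ (Cset g f ρ').card := by
  have := ballot_C hb h g
  rwa [Cset_filter_g, Cset_filter_g] at this

lemma S_card_mono {f : ℕ → Fin (r+1)} (hb : Ballot g f) {ρ ρ' : Fin (r+1)}
    (h : ρ ≤ ρ') : (Sset g f ρ).card ≤ (Sset g f ρ').card := by
  have := hb ρ ρ' h g
  rwa [Sset_filter_g, Sset_filter_g] at this

lemma RmkE_some_iff {f : ℕ → Fin (r+1)} {ρ : Fin (r+1)} {j v : ℕ}
    (hv1 : 1 ≤ v) (hv2 : v ≤ g) [DecidablePred (· < v)] :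
    RmkE g f ρ j = some v ↔ f v ≠ ρ ∧ ((Cset g f ρ).filter (· < v)).card = j := by
  constructor
  · intro h
    have hv : v ∈ Cset g f ρ := (Good.sort (Cset g f ρ)).2.2.1 j v h
    exact ⟨(mem_Cset.mp hv).2, (Good.sort (Cset g f ρ)).cnt h⟩
  · rintro ⟨hne, hcnt⟩
    have hv : v ∈ Cset g f ρ := mem_Cset.mpr ⟨⟨hv1, hv2⟩, hne⟩
    obtain ⟨j', hj'⟩ := (Good.sort (Cset g f ρ)).2.2.2 v hv
    have := (Good.sort (Cset g f ρ)).cnt hj'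
    have hjj : j' = j := by omega
    rw [← hjj]; exact hj'

lemma QmkE_some_iff {f : ℕ → Fin (r+1)} {ρ : Fin (r+1)} {j : Fin g} {v : ℕ}
    (hv1 : 1 ≤ v) (hv2 : v ≤ g) [DecidablePred (· < v)] :
    QmkE g f ρ j = some v ↔
      f v = ρ ∧ ((Sset g f ρ).filter (· < v)).card = g - 1 - (j : ℕ) := by
  constructor
  · intro h
    have hv : v ∈ Sset g f ρ := (Good.sort (Sset g f ρ)).2.2.1 _ v h
    exact ⟨(mem_Sset.mp hv).2, (Good.sort (Sset g f ρ)).cnt h⟩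
  · rintro ⟨hfe, hcnt⟩
    have hv : v ∈ Sset g f ρ := mem_Sset.mpr ⟨⟨hv1, hv2⟩, hfe⟩
    obtain ⟨j', hj'⟩ := (Good.sort (Sset g f ρ)).2.2.2 v hv
    have := (Good.sort (Sset g f ρ)).cnt hj'
    have hjj : j' = g - 1 - (j : ℕ) := by omega
    rw [QmkE, ← hjj]; exact hj'

noncomputable def Rmk (g r : ℕ) (f : ℕ → Fin (r+1)) (hb : Ballot g f) : TrSSYT g r r where
  entry := RmkE g f
  left := by
    intro ρ j j' hj hle
    rw [RmkE_isSome] at hj ⊢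
    omega
  down := by
    intro ρ ρ' j hj hle
    rw [RmkE_isSome] at hj ⊢
    have := C_card_mono hb hle
    omega
  vals := by
    intro ρ j v h
    have := (Good.sort (Cset g f ρ)).2.2.1 j v h
    exact (mem_Cset.mp this).1
  content := by
    classical
    intro v hv1 hv2
    have hset : {p : Fin (r+1) × ℕ | RmkE g f p.1 p.2 = some v} =
        ↑((Finset.univ.erase (f v)).image
          (fun ρ => (ρ, ((Cset g f ρ).filter (· < v)).card))) := by
      ext ⟨ρ, j⟩
      simp only [Set.mem_setOf_eq, Finset.coe_image, Set.mem_image, Finset.mem_coe,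
        Finset.mem_erase, Finset.mem_univ, and_true, Prod.mk.injEq]
      rw [RmkE_some_iff hv1 hv2]
      constructor
      · rintro ⟨hne, hcnt⟩
        exact ⟨ρ, Ne.symm hne, rfl, hcnt⟩
      · rintro ⟨ρ', hne, rfl, rfl⟩
        exact ⟨Ne.symm hne, rfl⟩
    rw [hset, Set.ncard_coe_finset]
    rw [Finset.card_image_of_injOn (fun x _ y _ h => (Prod.mk.injEq _ _ _ _).mp h |>.1)]
    rw [Finset.card_erase_of_mem (Finset.mem_univ _)]
    simp
  row_strict := by
    intro ρ j j' a b ha hb' hlt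
    exact sort_strict ha hb' hlt
  col_weak := by
    intro ρ ρ' j a b ha hb' hlt
    exact sort_le_sort (fun v => ballot_C hb (le_of_lt hlt) v) ha hb'

noncomputable def Qmk (g r : ℕ) (f : ℕ → Fin (r+1)) (hb : Ballot g f) : RotSYT g r where
  entry := QmkE g f
  right := by
    intro ρ j j' hj hle
    rw [QmkE_isSome] at hj ⊢
    have : (j : ℕ) ≤ (j' : ℕ) := hle
    omega
  up := by
    intro ρ ρ' j hj hle
    rw [QmkE_isSome] at hj ⊢
    have := S_card_mono hb hle
    omega
  vals := by
    intro ρ j v h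
    have := (Good.sort (Sset g f ρ)).2.2.1 _ v h
    exact (mem_Sset.mp this).1
  content := by
    classical
    intro v hv1 hv2
    have hg : 1 ≤ g := le_trans hv1 hv2
    set k := ((Sset g f (f v)).filter (· < v)).card with hk
    have hklt : k < (Sset g f (f v)).card := by
      have hv : v ∈ Sset g f (f v) := mem_Sset.mpr ⟨⟨hv1, hv2⟩, rfl⟩
      have : insert v ((Sset g f (f v)).filter (· < v)) ⊆ Sset g f (f v) := by
        intro u hu
        rcases Finset.mem_insert.mp hu with rfl | hu
        · exact hv
        · exact (Finset.mem_filter.mp hu).1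
      have hc := Finset.card_le_card this
      rw [Finset.card_insert_of_notMem (by simp)] at hc
      omega
    have hkg : k < g := lt_of_lt_of_le hklt Sset_card_le
    refine ⟨(f v, ⟨g - 1 - k, by omega⟩), ?_, ?_⟩
    · show QmkE g f (f v) _ = some v
      rw [QmkE_some_iff hv1 hv2]
      refine ⟨rfl, ?_⟩
      simp only
      omega
    · rintro ⟨ρ, j⟩ hj
      have := (QmkE_some_iff (f := f) (ρ := ρ) (j := j) hv1 hv2).mp hj
      obtain ⟨hfv, hcnt⟩ := this
      subst hfv
      have hjv : (j : ℕ) < g := j.isLt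
      have : (j : ℕ) = g - 1 - k := by omega
      simp only [Prod.mk.injEq]
      exact ⟨trivial, Fin.ext this⟩
  row_dec := by
    intro ρ j j' a b ha hb' hlt
    have hj' : (j' : ℕ) < g := j'.isLt
    have hlt' : (j : ℕ) < (j' : ℕ) := hlt
    exact sort_strict hb' ha (by omega)
  col_dec := by
    intro ρ ρ' j a b ha hb' hlt
    have hle : b ≤ a := sort_le_sort (fun v => hb ρ ρ' (le_of_lt hlt) v) hb' ha
    rcases eq_or_lt_of_le hle with heq | h
    · exfalso
      have haS : a ∈ Sset g f ρ := (Good.sort (Sset g f ρ)).2.2.1 _ a ha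
      have hbS : b ∈ Sset g f ρ' := (Good.sort (Sset g f ρ')).2.2.1 _ b hb'
      rw [heq] at hbS
      have h1 := (mem_Sset.mp haS).2
      have h2 := (mem_Sset.mp hbS).2
      rw [h1] at h2
      exact absurd h2 (ne_of_lt hlt)
    · exact h

end Stmt3Aux
namespace Stmt3Aux

variable {g r : ℕ}

/-! ### Reading off the row-assignment function from a tableau -/

lemma missing_row (R : TrSSYT g r r) {v : ℕ} (hv1 : 1 ≤ v) (hv2 : v ≤ g) :
    ∃! ρ : Fin (r+1), ∀ j, R.entry ρ j ≠ some v := by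
  classical
  set P := {p : Fin (r+1) × ℕ | R.entry p.1 p.2 = some v} with hPdef
  have hP : P.ncard = r := R.content v hv1 hv2
  have hinj : Set.InjOn Prod.fst P := by
    rintro ⟨ρ, j⟩ hp ⟨ρ', j'⟩ hq heq
    simp only [hPdef, Set.mem_setOf_eq] at hp hq
    simp only at heq
    subst heq
    have : j = j' := by
      rcases Nat.lt_trichotomy j j' with h | h | h
      · have := R.row_strict ρ j j' v v hp hq h; omega
      · exact h
      · have := R.row_strict ρ j' j v v hq hp h; omega
    subst this; rfl
  have hI : (Prod.fst '' P).ncard = r := by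
    rw [Set.ncard_image_of_injOn hinj, hP]
  have hmem : ∀ ρ : Fin (r+1), ρ ∈ Prod.fst '' P ↔ ∃ j, R.entry ρ j = some v := by
    intro ρ
    constructor
    · rintro ⟨⟨ρ', j⟩, hp, rfl⟩
      exact ⟨j, hp⟩
    · rintro ⟨j, hj⟩
      exact ⟨(ρ, j), hj, rfl⟩
  have hex : ∃ ρ : Fin (r+1), ρ ∉ Prod.fst '' P := by
    by_contra hc
    push_neg at hc
    have : Prod.fst '' P = Set.univ := Set.eq_univ_iff_forall.mpr hc
    rw [this, Set.ncard_univ, Nat.card_eq_fintype_card, Fintype.card_fin] at hI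
    omega
  obtain ⟨ρ₀, hρ₀⟩ := hex
  refine ⟨ρ₀, ?_, ?_⟩
  · intro j hj
    exact hρ₀ ((hmem ρ₀).mpr ⟨j, hj⟩)
  · intro ρ hρ
    by_contra hne
    have hρP : ρ ∉ Prod.fst '' P := by
      intro hmem'
      obtain ⟨j, hj⟩ := (hmem ρ).mp hmem'
      exact hρ j hj
    have hr1 : 1 ≤ r := by
      have h1 := ρ.isLt
      have h2 := ρ₀.isLt
      have : (ρ : ℕ) ≠ (ρ₀ : ℕ) := fun h => hne (Fin.ext h)
      omega
    have hsub : Prod.fst '' P ⊆ Set.univ \ {ρ, ρ₀} := by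
      intro x hx
      refine ⟨Set.mem_univ x, ?_⟩
      intro hmem'
      rcases hmem' with rfl | hmem'
      · exact hρP hx
      · rw [Set.mem_singleton_iff] at hmem'
        subst hmem'
        exact hρ₀ hx
    have hcard : (Set.univ \ {ρ, ρ₀} : Set (Fin (r+1))).ncard = r + 1 - 2 := by
      rw [Set.ncard_diff (Set.subset_univ _) (Set.toFinite _)]
      rw [Set.ncard_univ, Nat.card_eq_fintype_card, Fintype.card_fin, Set.ncard_pair hne]
    have := Set.ncard_le_ncard hsub (Set.toFinite _)
    rw [hI, hcard] at this
    omega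

open Classical in
noncomputable def fR (R : TrSSYT g r r) (v : ℕ) : Fin (r+1) :=
  if h : ∃ ρ : Fin (r+1), ∀ j, R.entry ρ j ≠ some v then h.choose else ⟨0, Nat.succ_pos r⟩

lemma fR_missing (R : TrSSYT g r r) {v : ℕ} (hv1 : 1 ≤ v) (hv2 : v ≤ g) :
    ∀ j, R.entry (fR R v) j ≠ some v := by
  obtain ⟨ρ₀, hρ₀, _⟩ := missing_row R hv1 hv2
  have h : ∃ ρ : Fin (r+1), ∀ j, R.entry ρ j ≠ some v := ⟨ρ₀, hρ₀⟩
  rw [fR, dif_pos h]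
  exact h.choose_spec

lemma fR_unique (R : TrSSYT g r r) {v : ℕ} (hv1 : 1 ≤ v) (hv2 : v ≤ g)
    {ρ : Fin (r+1)} (h : ∀ j, R.entry ρ j ≠ some v) : ρ = fR R v := by
  obtain ⟨ρ₀, hρ₀, huniq⟩ := missing_row R hv1 hv2
  have h1 : ρ = ρ₀ := huniq ρ h
  have h2 : fR R v = ρ₀ := huniq _ (fR_missing R hv1 hv2)
  rw [h1, h2]

lemma exists_entry_iff (R : TrSSYT g r r) {v : ℕ} (hv1 : 1 ≤ v) (hv2 : v ≤ g)
    {ρ : Fin (r+1)} : (∃ j, R.entry ρ j = some v) ↔ ρ ≠ fR R v := by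
  constructor
  · rintro ⟨j, hj⟩ hρ
    subst hρ
    exact fR_missing R hv1 hv2 j hj
  · intro hne
    by_contra hc
    push_neg at hc
    exact hne (fR_unique R hv1 hv2 hc)

lemma goodR (R : TrSSYT g r r) (ρ : Fin (r+1)) :
    Good (Cset g (fR R) ρ) (R.entry ρ) := by
  refine ⟨R.left ρ, R.row_strict ρ, ?_, ?_⟩
  · intro j a h
    have hb := R.vals ρ j a h
    rw [mem_Cset]
    refine ⟨hb, ?_⟩
    have : ρ ≠ fR R a := (exists_entry_iff R hb.1 hb.2).mp ⟨j, h⟩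
    exact this.symm
  · intro a ha
    rw [mem_Cset] at ha
    exact (exists_entry_iff R ha.1.1 ha.1.2).mpr ha.2.symm

lemma R_entry_eq (R : TrSSYT g r r) (ρ : Fin (r+1)) (j : ℕ) :
    R.entry ρ j = RmkE g (fR R) ρ j :=
  (goodR R ρ).eq_sort j

/-- The set of columns of row `ρ` of `R` holding a value `≤ v`. -/
noncomputable def Dcol (R : TrSSYT g r r) (ρ : Fin (r+1)) (v : ℕ) : Finset ℕ :=
  letI := Classical.dec
  (Finset.range g).filter (fun j => ∃ a, R.entry ρ j = some a ∧ a ≤ v)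

lemma Cfilter_eq_image (R : TrSSYT g r r) (ρ : Fin (r+1)) (v : ℕ)
    [DecidablePred (· ≤ v)] :
    (Cset g (fR R) ρ).filter (· ≤ v) = (Dcol R ρ v).image (fun j => (R.entry ρ j).getD 0) := by
  classical
  ext u
  simp only [Finset.mem_filter, Finset.mem_image, Dcol, Finset.mem_range]
  constructor
  · rintro ⟨hu, huv⟩
    obtain ⟨j, hj⟩ := (goodR R ρ).2.2.2 u hu
    have hjg : j < g := lt_of_lt_of_le ((goodR R ρ).lt_card hj) Cset_card_le
    exact ⟨j, ⟨by simpa using hjg, u, hj, huv⟩, by rw [hj]; rfl⟩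
  · rintro ⟨j, ⟨hjg, a, ha, hav⟩, hu⟩
    have : (R.entry ρ j).getD 0 = a := by rw [ha]; rfl
    rw [this] at hu
    subst hu
    exact ⟨(goodR R ρ).2.2.1 j a ha, hav⟩

lemma Dcol_injOn (R : TrSSYT g r r) (ρ : Fin (r+1)) (v : ℕ) :
    Set.InjOn (fun j => (R.entry ρ j).getD 0) ↑(Dcol R ρ v) := by
  classical
  intro j hj j' hj' heq
  simp only [Finset.coe_filter, Set.mem_setOf_eq, Dcol, Finset.mem_coe,
    Finset.mem_filter, Finset.mem_range] at hj hj'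
  obtain ⟨-, a, ha, -⟩ := hj
  obtain ⟨-, b, hb, -⟩ := hj'
  simp only [ha, hb, Option.getD_some] at heq
  subst heq
  rcases Nat.lt_trichotomy j j' with h | h | h
  · have := R.row_strict ρ j j' a a ha hb h; omega
  · exact h
  · have := R.row_strict ρ j' j a a hb ha h; omega

lemma Dcol_mono (R : TrSSYT g r r) {ρ ρ' : Fin (r+1)} (h : ρ ≤ ρ') (v : ℕ) :
    Dcol R ρ' v ⊆ Dcol R ρ v := by
  classical
  intro j hj
  simp only [Dcol, Finset.mem_filter, Finset.mem_range] at hj ⊢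
  obtain ⟨hjg, b, hb, hbv⟩ := hj
  refine ⟨hjg, ?_⟩
  rcases eq_or_lt_of_le h with rfl | hlt
  · exact ⟨b, hb, hbv⟩
  · have hsome : (R.entry ρ j).isSome := R.down ρ' ρ j (by rw [hb]; rfl) (le_of_lt hlt)
    obtain ⟨a, ha⟩ := Option.isSome_iff_exists.mp hsome
    exact ⟨a, ha, le_trans (R.col_weak ρ ρ' j a b ha hb hlt) hbv⟩

lemma ballot_fR (R : TrSSYT g r r) : Ballot g (fR R) := by
  classical
  intro ρ ρ' hle v
  have hC : ((Cset g (fR R) ρ').filter (· ≤ v)).card ≤ ((Cset g (fR R) ρ).filter (· ≤ v)).card := by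
    rw [Cfilter_eq_image R ρ v, Cfilter_eq_image R ρ' v,
      Finset.card_image_of_injOn (Dcol_injOn R ρ v),
      Finset.card_image_of_injOn (Dcol_injOn R ρ' v)]
    exact Finset.card_le_card (Dcol_mono R hle v)
  have h1 := filter_S_add_filter_C (g := g) (fR R) ρ v
  have h2 := filter_S_add_filter_C (g := g) (fR R) ρ' v
  omega

/-! ### Reading off the row-assignment function from a rotated SYT -/

open Classical in
noncomputable def fQ (Q : RotSYT g r) (v : ℕ) : Fin (r+1) :=
  if h : ∃ p : Fin (r+1) × Fin g, Q.entry p.1 p.2 = some v then h.choose.1 else ⟨0, Nat.succ_pos r⟩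

lemma fQ_exists (Q : RotSYT g r) {v : ℕ} (hv1 : 1 ≤ v) (hv2 : v ≤ g) :
    ∃ j, Q.entry (fQ Q v) j = some v := by
  obtain ⟨p₀, hp₀, -⟩ := Q.content v hv1 hv2
  have h : ∃ p : Fin (r+1) × Fin g, Q.entry p.1 p.2 = some v := ⟨p₀, hp₀⟩
  rw [fQ, dif_pos h]
  exact ⟨h.choose.2, h.choose_spec⟩

set_option maxHeartbeats 1000000 in
lemma fQ_eq (Q : RotSYT g r) {v : ℕ} (hv1 : 1 ≤ v) (hv2 : v ≤ g)
    {ρ : Fin (r+1)} {j : Fin g} (h : Q.entry ρ j = some v) : ρ = fQ Q v := by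
  obtain ⟨p₀, hp₀, huniq⟩ := Q.content v hv1 hv2
  obtain ⟨j', hj'⟩ := fQ_exists Q hv1 hv2
  have h1 : ((ρ, j) : Fin (r+1) × Fin g) = p₀ := huniq _ h
  have h2 : ((fQ Q v, j') : Fin (r+1) × Fin g) = p₀ := huniq _ hj'
  have := h1.trans h2.symm
  exact congrArg Prod.fst this

noncomputable def eQ (Q : RotSYT g r) (ρ : Fin (r+1)) (k : ℕ) : Option ℕ :=
  if h : k < g then Q.entry ρ ⟨g - 1 - k, by omega⟩ else none

lemma goodQ (Q : RotSYT g r) (ρ : Fin (r+1)) :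
    Good (Sset g (fQ Q) ρ) (eQ Q ρ) := by
  refine ⟨?_, ?_, ?_, ?_⟩
  · intro k k' hk hk'
    rw [eQ] at hk ⊢
    split at hk
    · next hkg =>
      rw [dif_pos (by omega : k' < g)]
      exact Q.right ρ _ _ hk (by simp only [Fin.mk_le_mk]; omega)
    · simp at hk
  · intro k k' a b ha hb hkk
    rw [eQ] at ha hb
    split at ha
    · next hkg =>
      split at hb
      · next hk'g =>
        exact Q.row_dec ρ _ _ b a hb ha (by simp only [Fin.mk_lt_mk]; omega)
      · simp at hb
    · simp at ha
  · intro k a h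
    rw [eQ] at h
    split at h
    · next hkg =>
      have hb := Q.vals ρ _ a h
      rw [mem_Sset]
      exact ⟨hb, (fQ_eq Q hb.1 hb.2 h).symm⟩
    · simp at h
  · intro a ha
    rw [mem_Sset] at ha
    obtain ⟨⟨ha1, ha2⟩, hf⟩ := ha
    obtain ⟨j, hj⟩ := fQ_exists Q ha1 ha2
    rw [hf] at hj
    refine ⟨g - 1 - (j : ℕ), ?_⟩
    have hg : 1 ≤ g := le_trans ha1 ha2
    have hjg : (j : ℕ) < g := j.isLt
    rw [eQ, dif_pos (by omega : g - 1 - (j : ℕ) < g)]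
    have : (⟨g - 1 - (g - 1 - (j : ℕ)), by omega⟩ : Fin g) = j :=
      Fin.ext (show g - 1 - (g - 1 - (j : ℕ)) = (j : ℕ) by omega)
    rw [this]
    exact hj

lemma Q_entry_eq (Q : RotSYT g r) (ρ : Fin (r+1)) (j : Fin g) :
    Q.entry ρ j = QmkE g (fQ Q) ρ j := by
  have hg : 0 < g := j.pos
  have hjg : (j : ℕ) < g := j.isLt
  have h := (goodQ Q ρ).eq_sort (g - 1 - (j : ℕ))
  rw [eQ, dif_pos (by omega : g - 1 - (j : ℕ) < g)] at h
  have heq : (⟨g - 1 - (g - 1 - (j : ℕ)), by omega⟩ : Fin g) = j :=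
    Fin.ext (show g - 1 - (g - 1 - (j : ℕ)) = (j : ℕ) by omega)
  rw [heq] at h
  exact h

noncomputable def DcolQ (Q : RotSYT g r) (ρ : Fin (r+1)) (v : ℕ) : Finset (Fin g) :=
  letI := Classical.dec
  Finset.univ.filter (fun j => ∃ a, Q.entry ρ j = some a ∧ a ≤ v)

lemma Sfilter_eq_image (Q : RotSYT g r) (ρ : Fin (r+1)) (v : ℕ)
    [DecidablePred (· ≤ v)] :
    (Sset g (fQ Q) ρ).filter (· ≤ v)
      = (DcolQ Q ρ v).image (fun j => (Q.entry ρ j).getD 0) := by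
  classical
  ext u
  simp only [Finset.mem_filter, Finset.mem_image, DcolQ, Finset.mem_univ, true_and]
  constructor
  · rintro ⟨hu, huv⟩
    rw [mem_Sset] at hu
    obtain ⟨⟨hu1, hu2⟩, hf⟩ := hu
    obtain ⟨j, hj⟩ := fQ_exists Q hu1 hu2
    rw [hf] at hj
    exact ⟨j, ⟨u, hj, huv⟩, by rw [hj]; rfl⟩
  · rintro ⟨j, ⟨a, ha, hav⟩, hu⟩
    have : (Q.entry ρ j).getD 0 = a := by rw [ha]; rfl
    rw [this] at hu
    subst hu
    have hb := Q.vals ρ j a ha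
    exact ⟨mem_Sset.mpr ⟨hb, (fQ_eq Q hb.1 hb.2 ha).symm⟩, hav⟩

lemma DcolQ_injOn (Q : RotSYT g r) (ρ : Fin (r+1)) (v : ℕ) :
    Set.InjOn (fun j => (Q.entry ρ j).getD 0) ↑(DcolQ Q ρ v) := by
  classical
  intro j hj j' hj' heq
  simp only [DcolQ, Finset.coe_filter, Set.mem_setOf_eq, Finset.mem_coe,
    Finset.mem_filter, Finset.mem_univ, true_and] at hj hj'
  obtain ⟨a, ha, -⟩ := hj
  obtain ⟨b, hb, -⟩ := hj'
  simp only [ha, hb, Option.getD_some] at heq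
  subst heq
  rcases lt_trichotomy j j' with h | h | h
  · have := Q.row_dec ρ j j' a a ha hb h; omega
  · exact h
  · have := Q.row_dec ρ j' j a a hb ha h; omega

lemma DcolQ_mono (Q : RotSYT g r) {ρ ρ' : Fin (r+1)} (h : ρ ≤ ρ') (v : ℕ) :
    DcolQ Q ρ v ⊆ DcolQ Q ρ' v := by
  classical
  intro j hj
  simp only [DcolQ, Finset.mem_filter, Finset.mem_univ, true_and] at hj ⊢
  obtain ⟨a, ha, hav⟩ := hj
  rcases eq_or_lt_of_le h with rfl | hlt
  · exact ⟨a, ha, hav⟩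
  · have hsome : (Q.entry ρ' j).isSome := Q.up ρ ρ' j (by rw [ha]; rfl) (le_of_lt hlt)
    obtain ⟨b, hb⟩ := Option.isSome_iff_exists.mp hsome
    exact ⟨b, hb, le_trans (le_of_lt (Q.col_dec ρ ρ' j a b ha hb hlt)) hav⟩

lemma ballot_fQ (Q : RotSYT g r) : Ballot g (fQ Q) := by
  classical
  intro ρ ρ' hle v
  rw [Sfilter_eq_image Q ρ v, Sfilter_eq_image Q ρ' v,
    Finset.card_image_of_injOn (DcolQ_injOn Q ρ v),
    Finset.card_image_of_injOn (DcolQ_injOn Q ρ' v)]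
  exact Finset.card_le_card (DcolQ_mono Q hle v)

end Stmt3Aux
namespace Stmt3Aux

variable {g r : ℕ}

/-! ### Assembling the bijection -/

lemma TrSSYT_ext {R1 R2 : TrSSYT g r r} (h : R1.entry = R2.entry) : R1 = R2 := by
  cases R1; cases R2; cases h; rfl

lemma RotSYT_ext {Q1 Q2 : RotSYT g r} (h : Q1.entry = Q2.entry) : Q1 = Q2 := by
  cases Q1; cases Q2; cases h; rfl

lemma Sset_congr {f f' : ℕ → Fin (r+1)} (h : ∀ v, 1 ≤ v → v ≤ g → f v = f' v)
    (ρ : Fin (r+1)) : Sset g f ρ = Sset g f' ρ := by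
  classical
  apply Finset.filter_congr
  intro u hu
  rw [Finset.mem_Icc] at hu
  rw [h u hu.1 hu.2]

lemma Cset_congr {f f' : ℕ → Fin (r+1)} (h : ∀ v, 1 ≤ v → v ≤ g → f v = f' v)
    (ρ : Fin (r+1)) : Cset g f ρ = Cset g f' ρ := by
  classical
  apply Finset.filter_congr
  intro u hu
  rw [Finset.mem_Icc] at hu
  rw [h u hu.1 hu.2]

lemma fQ_Qmk (f : ℕ → Fin (r+1)) (hb : Ballot g f) {v : ℕ} (hv1 : 1 ≤ v) (hv2 : v ≤ g) :
    fQ (Qmk g r f hb) v = f v := by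
  obtain ⟨j, hj⟩ := fQ_exists (Qmk g r f hb) hv1 hv2
  have hj' : QmkE g f (fQ (Qmk g r f hb) v) j = some v := hj
  rw [QmkE] at hj'
  have hv : v ∈ Sset g f (fQ (Qmk g r f hb) v) :=
    (Finset.mem_sort _).mp (List.mem_of_getElem? hj')
  exact ((mem_Sset.mp hv).2).symm

lemma fR_Rmk (f : ℕ → Fin (r+1)) (hb : Ballot g f) {v : ℕ} (hv1 : 1 ≤ v) (hv2 : v ≤ g) :
    fR (Rmk g r f hb) v = f v := by
  symm
  apply fR_unique (Rmk g r f hb) hv1 hv2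
  intro j hj
  have hj' : RmkE g f (f v) j = some v := hj
  rw [RmkE] at hj'
  have hv : v ∈ Cset g f (f v) := (Finset.mem_sort _).mp (List.mem_of_getElem? hj')
  exact (mem_Cset.mp hv).2 rfl

noncomputable def phi (g r : ℕ) : TrSSYT g r r ≃ RotSYT g r where
  toFun R := Qmk g r (fR R) (ballot_fR R)
  invFun Q := Rmk g r (fQ Q) (ballot_fQ Q)
  left_inv R := by
    apply TrSSYT_ext
    funext ρ j
    show RmkE g (fQ (Qmk g r (fR R) (ballot_fR R))) ρ j = R.entry ρ j
    rw [RmkE, Cset_congr (fun v h1 h2 => fQ_Qmk (fR R) (ballot_fR R) h1 h2) ρ,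
      ← RmkE, ← R_entry_eq]
  right_inv Q := by
    apply RotSYT_ext
    funext ρ j
    show QmkE g (fR (Rmk g r (fQ Q) (ballot_fQ Q))) ρ j = Q.entry ρ j
    rw [QmkE, Sset_congr (fun v h1 h2 => fR_Rmk (fQ Q) (ballot_fQ Q) h1 h2) ρ,
      ← QmkE, ← Q_entry_eq]

end Stmt3Aux

/-- There is a bijection φ from TrSSYT(g,r) to 180°-rotated SYT of size g and
height ≤ r+1 such that for every R, the shapes of R and φ(R) are complementary
in the (r+1)×g rectangle. -/
theorem stmt_3 (g r : ℕ) :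
    ∃ φ : TrSSYT g r r ≃ RotSYT g r,
      ∀ (R : TrSSYT g r r) (i : Fin (r + 1)) (j : Fin g),
        (R.entry i (j : ℕ)).isSome ↔ ¬ ((φ R).entry i j).isSome := by
  classical
  refine ⟨Stmt3Aux.phi g r, ?_⟩
  intro R i j
  have hR : R.entry i (j : ℕ) = Stmt3Aux.RmkE g (Stmt3Aux.fR R) i (j : ℕ) :=
    Stmt3Aux.R_entry_eq R i (j : ℕ)
  have hφ : ((Stmt3Aux.phi g r) R).entry i j
      = Stmt3Aux.QmkE g (Stmt3Aux.fR R) i j := rfl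
  rw [hR, hφ, Stmt3Aux.RmkE_isSome, Stmt3Aux.QmkE_isSome]
  have hsum := Stmt3Aux.S_card_add_C_card (g := g) (Stmt3Aux.fR R) i
  have hjg : (j : ℕ) < g := j.isLt
  have hS := Stmt3Aux.Sset_card_le (g := g) (f := Stmt3Aux.fR R) (ρ := i)
  omega
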